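/- Define maps on the free abelian groups Q'_n(A) = ℤ[A^{C_n}] by the Dixmier product: the bilinear map ℤ[A^{C_n}] ⊗ ℤ[B^{C_m}] → ℤ[(A⊗B)^{C_{n+m}}] sending generators f : C_n → A and g : C_m → B to the function C_{n+m} = C_n × C_m → A⊗B, (x,y) ↦ f(x)⊗g(y). This product is a chain map with respect to the differentials δ, i.e. it satisfies the Leibniz rule δ(f·g) = δ(f)·g + (−1)^{|f|} f·δ(g) on generators. -/

import Mathlib

set_option synthInstance.maxHeartbeats 1000000

open scoped TensorProduct

section QDelta

variable (A : Type) [AddCommGroup A]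

def faceR (n : ℕ) (i : Fin (n + 1)) :
    FreeAbelianGroup ((Fin (n + 1) → Bool) → A) →+ FreeAbelianGroup ((Fin n → Bool) → A) :=
  FreeAbelianGroup.map (fun f c => f (i.insertNth false c))

def faceS (n : ℕ) (i : Fin (n + 1)) :
    FreeAbelianGroup ((Fin (n + 1) → Bool) → A) →+ FreeAbelianGroup ((Fin n → Bool) → A) :=
  FreeAbelianGroup.map (fun f c => f (i.insertNth true c))

def faceP (n : ℕ) (i : Fin (n + 1)) :
    FreeAbelianGroup ((Fin (n + 1) → Bool) → A) →+ FreeAbelianGroup ((Fin n → Bool) → A) :=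
  FreeAbelianGroup.map (fun f c => f (i.insertNth false c) + f (i.insertNth true c))

/-- MacLane's `Q`-construction differential `δ = Σ_{i=1}^{n+1} (-1)^i (P_i - R_i - S_i)`. -/
def qDelta (n : ℕ) :
    FreeAbelianGroup ((Fin (n + 1) → Bool) → A) →+ FreeAbelianGroup ((Fin n → Bool) → A) :=
  ∑ i : Fin (n + 1), ((-1 : ℤ) ^ (i.1 + 1)) •
    (faceP A n i - faceR A n i - faceS A n i)

end QDelta

section Dixmier

variable (A B : Type) [AddCommGroup A] [AddCommGroup B]

/-- The Dixmier product of two generators: for `f : C_a → A` and `g : C_b → B`,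
the function `C_c = C_a × C_b → A ⊗ B`, `(x, y) ↦ f x ⊗ g y`. -/
noncomputable def dixGen (a b c : ℕ) (h : c = a + b) (f : (Fin a → Bool) → A) (g : (Fin b → Bool) → B) :
    (Fin c → Bool) → (A ⊗[ℤ] B) := fun z =>
  f (fun i => z (Fin.cast h.symm (Fin.castAdd b i))) ⊗ₜ[ℤ]
    g (fun j => z (Fin.cast h.symm (Fin.natAdd a j)))

/-- The Dixmier product `ℤ[A^{C_a}] ⊗ ℤ[B^{C_b}] → ℤ[(A⊗B)^{C_{a+b}}]`, as a
bilinear map, determined on generators by `dixGen`. -/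
noncomputable def dix (a b c : ℕ) (h : c = a + b) :
    FreeAbelianGroup ((Fin a → Bool) → A) →+
      FreeAbelianGroup ((Fin b → Bool) → B) →+
        FreeAbelianGroup ((Fin c → Bool) → (A ⊗[ℤ] B)) :=
  FreeAbelianGroup.lift (fun f =>
    FreeAbelianGroup.lift (fun g => FreeAbelianGroup.of (dixGen A B a b c h f g)))

/-- Extend a Boolean cube point to `ℕ`. -/
def ext0 {c : ℕ} (z : Fin c → Bool) : ℕ → Bool := fun t => if h : t < c then z ⟨t, h⟩ else false

lemma ext0_eq {c : ℕ} (z : Fin c → Bool) (k : Fin c) : ext0 z k.1 = z k := by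
  simp [ext0]

lemma insVal {c : ℕ} (i : Fin (c + 1)) (b : Bool) (z : Fin c → Bool) (k : Fin (c + 1)) :
    (Fin.insertNth i b z : Fin (c + 1) → Bool) k =
      if k.1 < i.1 then ext0 z k.1 else if k.1 = i.1 then b else ext0 z (k.1 - 1) := by
  have h1 : i.1 < c + 1 := i.isLt
  have h2 : k.1 < c + 1 := k.isLt
  rcases Nat.lt_trichotomy k.1 i.1 with h | h | h
  · rw [if_pos h]
    have hk : k < i := h
    rw [Fin.insertNth_apply_below hk]
    simp only [eq_rec_constant]
    unfold ext0
    rw [dif_pos (by omega)]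
    exact congrArg z (Fin.ext (by simp))
  · have : k = i := Fin.ext h
    subst this
    simp [h]
  · rw [if_neg (by omega), if_neg (by omega)]
    have hk : i < k := h
    rw [Fin.insertNth_apply_above hk]
    simp only [eq_rec_constant]
    unfold ext0
    rw [dif_pos (by omega)]
    exact congrArg z (Fin.ext (by simp))

/-- Key coordinate lemma, left insertions. -/
lemma keyL (n M K : ℕ) (hK : K = n + M) (h' : K + 1 = (n + 1) + M)
    (f : (Fin (n + 1) → Bool) → A) (g : (Fin M → Bool) → B)
    (i : Fin (K + 1)) (i' : Fin (n + 1)) (hi : i.1 = i'.1) (b : Bool) :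
    (fun z : Fin K → Bool => dixGen A B (n + 1) M (K + 1) h' f g (Fin.insertNth i b z))
      = dixGen A B n M K hK (fun c => f (i'.insertNth b c)) g := by
  have hi' : i'.1 ≤ n := by omega
  funext z
  unfold dixGen
  congr 1
  · refine congrArg f ?_
    funext k
    have hkk : k.1 < n + 1 := k.isLt
    rw [insVal]
    rw [insVal]
    have hk : (Fin.cast h'.symm (Fin.castAdd M k)).1 = k.1 := rfl
    rw [hk, hi]
    simp only [ext0]
    split_ifs <;>
      first
        | rfl
        | (exfalso; omega)
        | exact congrArg z (Fin.ext (by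
            simp only [Fin.coe_cast, Fin.coe_castAdd, Fin.coe_natAdd]; omega))
  · refine congrArg g ?_
    funext j
    have hjj : j.1 < M := j.isLt
    rw [insVal]
    have hj : (Fin.cast h'.symm (Fin.natAdd (n + 1) j)).1 = n + 1 + j.1 := rfl
    rw [hj]
    rw [if_neg (by omega), if_neg (by omega)]
    simp only [ext0]
    split_ifs <;>
      first
        | rfl
        | (exfalso; omega)
        | exact congrArg z (Fin.ext (by
            simp only [Fin.coe_cast, Fin.coe_castAdd, Fin.coe_natAdd]; omega))

/-- Key coordinate lemma, right insertions. -/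
lemma keyR (N m K : ℕ) (hK : K = N + m) (h' : K + 1 = N + (m + 1))
    (f : (Fin N → Bool) → A) (g : (Fin (m + 1) → Bool) → B)
    (i : Fin (K + 1)) (j' : Fin (m + 1)) (hi : i.1 = N + j'.1) (b : Bool) :
    (fun z : Fin K → Bool => dixGen A B N (m + 1) (K + 1) h' f g (Fin.insertNth i b z))
      = dixGen A B N m K hK f (fun c => g (j'.insertNth b c)) := by
  have hj' : j'.1 ≤ m := by omega
  funext z
  unfold dixGen
  congr 1
  · refine congrArg f ?_
    funext k
    have hkk : k.1 < N := k.isLt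
    rw [insVal]
    have hk : (Fin.cast h'.symm (Fin.castAdd (m + 1) k)).1 = k.1 := rfl
    rw [hk, hi]
    rw [if_pos (by omega)]
    simp only [ext0]
    split_ifs <;>
      first
        | rfl
        | (exfalso; omega)
        | exact congrArg z (Fin.ext (by
            simp only [Fin.coe_cast, Fin.coe_castAdd, Fin.coe_natAdd]; omega))
  · refine congrArg g ?_
    funext j
    have hjj : j.1 < m + 1 := j.isLt
    rw [insVal]
    rw [insVal]
    have hj : (Fin.cast h'.symm (Fin.natAdd N j)).1 = N + j.1 := rfl
    rw [hj, hi]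
    simp only [ext0]
    split_ifs <;>
      first
        | rfl
        | (exfalso; omega)
        | exact congrArg z (Fin.ext (by
            simp only [Fin.coe_cast, Fin.coe_castAdd, Fin.coe_natAdd]; omega))

lemma dixGen_addLeft (a b c : ℕ) (h : c = a + b) (f1 f2 : (Fin a → Bool) → A)
    (g : (Fin b → Bool) → B) :
    dixGen A B a b c h (fun x => f1 x + f2 x) g = fun z =>
      dixGen A B a b c h f1 g z + dixGen A B a b c h f2 g z := by
  funext z
  unfold dixGen
  simp [TensorProduct.add_tmul]

lemma dixGen_addRight (a b c : ℕ) (h : c = a + b) (f : (Fin a → Bool) → A)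
    (g1 g2 : (Fin b → Bool) → B) :
    dixGen A B a b c h f (fun x => g1 x + g2 x) = fun z =>
      dixGen A B a b c h f g1 z + dixGen A B a b c h f g2 z := by
  funext z
  unfold dixGen
  simp [TensorProduct.tmul_add]

/-- The combined face map `P - R - S` on a left-position index of a Dixmier generator. -/
lemma prsL (n M K : ℕ) (hK : K = n + M) (h' : K + 1 = (n + 1) + M)
    (f : (Fin (n + 1) → Bool) → A) (g : (Fin M → Bool) → B)
    (i : Fin (K + 1)) (i' : Fin (n + 1)) (hi : i.1 = i'.1) :
    (faceP (A ⊗[ℤ] B) K i - faceR (A ⊗[ℤ] B) K i - faceS (A ⊗[ℤ] B) K i)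
        (FreeAbelianGroup.of (dixGen A B (n + 1) M (K + 1) h' f g))
      = dix A B n M K hK
          ((faceP A n i' - faceR A n i' - faceS A n i') (FreeAbelianGroup.of f))
          (FreeAbelianGroup.of g) := by
  have hFalse := keyL A B n M K hK h' f g i i' hi false
  have hTrue := keyL A B n M K hK h' f g i i' hi true
  simp only [AddMonoidHom.sub_apply, faceP, faceR, faceS, FreeAbelianGroup.map_of_apply,
    map_sub, dix, FreeAbelianGroup.lift_apply_of]
  refine congrArg₂ (· - ·) (congrArg₂ (· - ·) ?_ ?_) ?_
  · refine congrArg FreeAbelianGroup.of ?_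
    rw [dixGen_addLeft]
    funext z
    exact congrArg₂ (· + ·) (congrFun hFalse z) (congrFun hTrue z)
  · exact congrArg FreeAbelianGroup.of hFalse
  · exact congrArg FreeAbelianGroup.of hTrue

/-- The combined face map `P - R - S` on a right-position index of a Dixmier generator. -/
lemma prsR (N m K : ℕ) (hK : K = N + m) (h' : K + 1 = N + (m + 1))
    (f : (Fin N → Bool) → A) (g : (Fin (m + 1) → Bool) → B)
    (i : Fin (K + 1)) (j' : Fin (m + 1)) (hi : i.1 = N + j'.1) :
    (faceP (A ⊗[ℤ] B) K i - faceR (A ⊗[ℤ] B) K i - faceS (A ⊗[ℤ] B) K i)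
        (FreeAbelianGroup.of (dixGen A B N (m + 1) (K + 1) h' f g))
      = dix A B N m K hK (FreeAbelianGroup.of f)
          ((faceP B m j' - faceR B m j' - faceS B m j') (FreeAbelianGroup.of g)) := by
  have hFalse := keyR A B N m K hK h' f g i j' hi false
  have hTrue := keyR A B N m K hK h' f g i j' hi true
  simp only [AddMonoidHom.sub_apply, faceP, faceR, faceS, FreeAbelianGroup.map_of_apply,
    map_sub, dix, FreeAbelianGroup.lift_apply_of]
  refine congrArg₂ (· - ·) (congrArg₂ (· - ·) ?_ ?_) ?_
  · refine congrArg FreeAbelianGroup.of ?_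
    rw [dixGen_addRight]
    funext z
    exact congrArg₂ (· + ·) (congrFun hFalse z) (congrFun hTrue z)
  · exact congrArg FreeAbelianGroup.of hFalse
  · exact congrArg FreeAbelianGroup.of hTrue

lemma dix_qDelta_left (n M K : ℕ) (hK : K = n + M)
    (f : (Fin (n + 1) → Bool) → A) (g : (Fin M → Bool) → B) :
    dix A B n M K hK (qDelta A n (FreeAbelianGroup.of f)) (FreeAbelianGroup.of g)
      = ∑ i : Fin (n + 1), ((-1 : ℤ) ^ (i.1 + 1)) •
          dix A B n M K hK
            ((faceP A n i - faceR A n i - faceS A n i) (FreeAbelianGroup.of f))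
            (FreeAbelianGroup.of g) := by
  simp only [qDelta, AddMonoidHom.finset_sum_apply, AddMonoidHom.smul_apply,
    map_sum, map_zsmul]

lemma dix_qDelta_right (N m K : ℕ) (hK : K = N + m)
    (f : (Fin N → Bool) → A) (g : (Fin (m + 1) → Bool) → B) :
    dix A B N m K hK (FreeAbelianGroup.of f) (qDelta B m (FreeAbelianGroup.of g))
      = ∑ j : Fin (m + 1), ((-1 : ℤ) ^ (j.1 + 1)) •
          dix A B N m K hK (FreeAbelianGroup.of f)
            ((faceP B m j - faceR B m j - faceS B m j) (FreeAbelianGroup.of g)) := by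
  simp only [qDelta, AddMonoidHom.finset_sum_apply, AddMonoidHom.smul_apply,
    map_sum, map_zsmul]

lemma sum_split (a b : ℕ) {M : Type} [AddCommMonoid M] (F : Fin (a + b + 1) → M) :
    ∑ i, F i = (∑ i : Fin a, F ⟨i.1, by omega⟩) + ∑ j : Fin (b + 1), F ⟨a + j.1, by omega⟩ := by
  have h' : a + (b + 1) = a + b + 1 := by omega
  rw [← Fintype.sum_bijective (Fin.cast h') (finCongr h').bijective
    (fun i => F (Fin.cast h' i)) F (fun _ => rfl)]
  rw [Fin.sum_univ_add]
  congr 1 <;> refine Finset.sum_congr rfl fun i _ => congrArg F (Fin.ext ?_) <;> simp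

/-- The Leibniz rule for the Dixmier product on generators:
`δ(f·g) = δ(f)·g + (-1)^{|f|} f·δ(g)`, including the edge cases where one of the
two factors has degree `0` (in which case the corresponding `δ`-term is absent). -/
theorem dix_leibniz (n m : ℕ) :
    (∀ (f : (Fin (n + 1) → Bool) → A) (g : (Fin (m + 1) → Bool) → B),
      qDelta (A ⊗[ℤ] B) ((n + 1) + m)
          (dix A B (n + 1) (m + 1) ((n + 1) + (m + 1)) rfl
            (FreeAbelianGroup.of f) (FreeAbelianGroup.of g))
        = dix A B n (m + 1) ((n + 1) + m) (by omega)
            (qDelta A n (FreeAbelianGroup.of f)) (FreeAbelianGroup.of g)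
          + ((-1 : ℤ) ^ (n + 1)) •
            dix A B (n + 1) m ((n + 1) + m) rfl
              (FreeAbelianGroup.of f) (qDelta B m (FreeAbelianGroup.of g))) ∧
    (∀ (f : (Fin 0 → Bool) → A) (g : (Fin (m + 1) → Bool) → B),
      qDelta (A ⊗[ℤ] B) m
          (dix A B 0 (m + 1) (m + 1) (by omega)
            (FreeAbelianGroup.of f) (FreeAbelianGroup.of g))
        = dix A B 0 m m (by omega)
            (FreeAbelianGroup.of f) (qDelta B m (FreeAbelianGroup.of g))) ∧
    (∀ (f : (Fin (n + 1) → Bool) → A) (g : (Fin 0 → Bool) → B),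
      qDelta (A ⊗[ℤ] B) n
          (dix A B (n + 1) 0 (n + 1) rfl
            (FreeAbelianGroup.of f) (FreeAbelianGroup.of g))
        = dix A B n 0 n rfl
            (qDelta A n (FreeAbelianGroup.of f)) (FreeAbelianGroup.of g)) := by
  refine ⟨fun f g => ?_, fun f g => ?_, fun f g => ?_⟩
  · -- main case
    have hF : dix A B (n + 1) (m + 1) ((n + 1) + (m + 1)) rfl
        (FreeAbelianGroup.of f) (FreeAbelianGroup.of g)
        = FreeAbelianGroup.of (dixGen A B (n + 1) (m + 1) ((n + 1) + (m + 1)) rfl f g) := by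
      simp [dix, FreeAbelianGroup.lift_apply_of]
    rw [hF, dix_qDelta_left, dix_qDelta_right]
    simp only [qDelta, AddMonoidHom.finset_sum_apply, AddMonoidHom.smul_apply]
    rw [sum_split]
    congr 1
    · refine Finset.sum_congr rfl fun i _ => ?_
      exact congrArg (fun t => ((-1 : ℤ) ^ (i.1 + 1)) • t)
        (prsL A B n (m + 1) ((n + 1) + m) (by omega) (by omega) f g ⟨i.1, by omega⟩ i rfl)
    · rw [Finset.smul_sum]
      refine Finset.sum_congr rfl fun j _ => ?_
      rw [smul_smul, ← pow_add]
      exact congrArg (fun t => ((-1 : ℤ) ^ ((n + 1) + j.1 + 1)) • t)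
        (prsR A B (n + 1) m ((n + 1) + m) rfl rfl f g ⟨(n + 1) + j.1, by omega⟩ j rfl)
  · -- left factor has degree 0
    have hF : dix A B 0 (m + 1) (m + 1) (by omega)
        (FreeAbelianGroup.of f) (FreeAbelianGroup.of g)
        = FreeAbelianGroup.of (dixGen A B 0 (m + 1) (m + 1) (by omega) f g) := by
      simp [dix, FreeAbelianGroup.lift_apply_of]
    rw [hF, dix_qDelta_right]
    simp only [qDelta, AddMonoidHom.finset_sum_apply, AddMonoidHom.smul_apply]
    refine Finset.sum_congr rfl fun j _ => ?_
    exact congrArg (fun t => ((-1 : ℤ) ^ (j.1 + 1)) • t)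
      (prsR A B 0 m m (by omega) (by omega) f g j j (by omega))
  · -- right factor has degree 0
    have hF : dix A B (n + 1) 0 (n + 1) rfl
        (FreeAbelianGroup.of f) (FreeAbelianGroup.of g)
        = FreeAbelianGroup.of (dixGen A B (n + 1) 0 (n + 1) rfl f g) := by
      simp [dix, FreeAbelianGroup.lift_apply_of]
    rw [hF, dix_qDelta_left]
    simp only [qDelta, AddMonoidHom.finset_sum_apply, AddMonoidHom.smul_apply]
    refine Finset.sum_congr rfl fun i _ => ?_
    exact congrArg (fun t => ((-1 : ℤ) ^ (i.1 + 1)) • t)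
      (prsL A B n 0 n rfl (by omega) f g i i rfl)

end Dixmier
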